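/- Let b, c > 0 with B = c·exp(b) > 1, and let k(x) = sqrt(c²·exp(−2x) − (x+b)²) on the set where the radicand is positive. Then for every x < x_M with k(x) > 0, the derivative k'(x) is negative. -/

import Mathlib

open Real

theorem stmt_5 (b c uM : ℝ) (hb : 0 < b) (hc : 0 < c)
    (hB : c * Real.exp b > 1)
    (huM : 0 < uM) (hroot : (c * Real.exp b) * Real.exp (-uM) = uM)
    (k : ℝ → ℝ)
    (hk : ∀ x : ℝ, x ≤ uM - b →
      k x = Real.sqrt (c ^ 2 * Real.exp (-2 * x) - (x + b) ^ 2)) :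
    ∀ x : ℝ, x < uM - b → k x > 0 → deriv k x < 0 := by
  intro x hx hkx
  set g : ℝ → ℝ := fun y => c ^ 2 * Real.exp (-2 * y) - (y + b) ^ 2 with hg
  have hkx' := hk x (le_of_lt hx)
  have hgx : 0 < g x := by
    by_contra h
    push_neg at h
    rw [hkx'] at hkx
    rw [Real.sqrt_eq_zero'.mpr (by simpa [hg] using h)] at hkx
    exact lt_irrefl 0 hkx
  have h1 : HasDerivAt (fun y => Real.exp (-2 * y)) (Real.exp (-2 * x) * (-2)) x := by
    have := (Real.hasDerivAt_exp (-2 * x)).comp x ((hasDerivAt_id x).const_mul (-2))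
    simpa [Function.comp_def] using this
  have h2 : HasDerivAt (fun y : ℝ => (y + b) ^ 2) (2 * (x + b)) x := by
    simpa using ((hasDerivAt_id x).add_const b).fun_pow 2
  have hg' : HasDerivAt g (c ^ 2 * (Real.exp (-2 * x) * (-2)) - 2 * (x + b)) x :=
    (h1.const_mul (c ^ 2)).sub h2
  have hsq : HasDerivAt (fun y => Real.sqrt (g y))
      (1 / (2 * Real.sqrt (g x)) * (c ^ 2 * (Real.exp (-2 * x) * (-2)) - 2 * (x + b))) x :=
    (Real.hasDerivAt_sqrt hgx.ne').comp x hg'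
  have heq : k =ᶠ[nhds x] fun y => Real.sqrt (g y) := by
    filter_upwards [Iio_mem_nhds hx] with y hy
    exact hk y (le_of_lt hy)
  rw [heq.deriv_eq, hsq.deriv]
  have hsqrtpos : 0 < Real.sqrt (g x) := Real.sqrt_pos.mpr hgx
  have key : 0 < c ^ 2 * Real.exp (-2 * x) + (x + b) := by
    rcases le_or_gt 0 (x + b) with hu | hu
    · have h0 : 0 < c ^ 2 * Real.exp (-2 * x) := by positivity
      linarith
    · -- A > (x+b)^2 from hgx, and A > 1 since exp(-2x) > exp(2b)
      have hexp : Real.exp (2 * b) < Real.exp (-2 * x) :=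
        Real.exp_lt_exp.mpr (by linarith)
      have h2b : Real.exp (2 * b) = Real.exp b * Real.exp b := by
        rw [two_mul, Real.exp_add]
      have hA1 : 1 < c ^ 2 * Real.exp (-2 * x) := by nlinarith [Real.exp_pos b]
      have hA2 : (x + b) ^ 2 < c ^ 2 * Real.exp (-2 * x) := by
        have := hgx; simp only [hg] at this; linarith
      nlinarith [sq_nonneg (x + b + 1)]
  have : c ^ 2 * (Real.exp (-2 * x) * (-2)) - 2 * (x + b) < 0 := by nlinarith
  have hpos : 0 < 1 / (2 * Real.sqrt (g x)) := by positivity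
  exact mul_neg_of_pos_of_neg hpos this
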